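/- For the unit ball b_2^m of ℓ_2^m viewed as a subset of ℓ_∞^m with n ≤ m, the Gelfand n-width satisfies d^n(b_2^m, ℓ_∞^m) = √(1 − n/m). -/

import Mathlib

open scoped ENNReal

/-- Gelfand n-width: infimum over subspaces of codimension ≤ n of the supremum of
norms of elements of `H` in the subspace. -/
noncomputable def gelWidth {Y : Type*} [NormedAddCommGroup Y] [NormedSpace ℝ Y]
    (n : ℕ) (H : Set Y) : ℝ≥0∞ :=
  ⨅ (Z : Submodule ℝ Y)
    (_ : FiniteDimensional ℝ (Y ⧸ Z) ∧ Module.finrank ℝ (Y ⧸ Z) ≤ n),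
    ⨆ x ∈ H ∩ (Z : Set Y), (‖x‖₊ : ℝ≥0∞)

open Finset Real


lemma sum_exp_zero (m : ℕ) (hm : 0 < m) (t : ℤ) (ht : ¬ ((m:ℤ) ∣ t)) :
    ∑ i : Fin m, Complex.exp (2 * Real.pi * Complex.I * t * i / m) = 0 := by
  have hm' : (m : ℂ) ≠ 0 := Nat.cast_ne_zero.mpr hm.ne'
  have hz : ∀ i : Fin m, Complex.exp (2 * Real.pi * Complex.I * t * i / m)
      = (Complex.exp (2 * Real.pi * Complex.I * t / m)) ^ (i : ℕ) := by
    intro i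
    rw [← Complex.exp_nat_mul]
    ring_nf
  simp_rw [hz]
  have hne : Complex.exp (2 * Real.pi * Complex.I * t / m) ≠ 1 := by
    intro h
    rw [Complex.exp_eq_one_iff] at h
    obtain ⟨k, hk⟩ := h
    have hpi : (Real.pi : ℂ) ≠ 0 := Complex.ofReal_ne_zero.mpr Real.pi_ne_zero
    have hI := Complex.I_ne_zero
    have hc : (2 * (Real.pi:ℂ) * Complex.I) ≠ 0 :=
      mul_ne_zero (mul_ne_zero two_ne_zero hpi) hI
    field_simp at hk
    have h2 : (2 * (Real.pi:ℂ) * Complex.I) * t = (2 * (Real.pi:ℂ) * Complex.I) * (k * m) := by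
      linear_combination (2 * (Real.pi:ℂ) * Complex.I) * hk
    have h3 : (t : ℂ) = k * m := mul_left_cancel₀ hc h2
    have h4 : t = k * m := by exact_mod_cast h3
    exact ht ⟨k, by rw [h4, mul_comm]⟩
  rw [Fin.sum_univ_eq_sum_range, geom_sum_eq hne]
  have hpow : Complex.exp (2 * Real.pi * Complex.I * t / m) ^ m = 1 := by
    rw [← Complex.exp_nat_mul]
    have he : (m : ℂ) * (2 * Real.pi * Complex.I * t / m) = t * (2 * Real.pi * Complex.I) := by
      field_simp
    rw [he, Complex.exp_int_mul_two_pi_mul_I]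
  rw [hpow, sub_self, zero_div]

lemma sum_cos_zero (m : ℕ) (hm : 0 < m) (t : ℤ) (ht : ¬ ((m:ℤ) ∣ t)) :
    ∑ i : Fin m, Real.cos (2 * Real.pi * t * i / m) = 0 := by
  have h := sum_exp_zero m hm t ht
  have he : ∀ i : Fin m, Complex.exp (2 * Real.pi * Complex.I * t * i / m)
      = Complex.exp ((2 * Real.pi * t * i / m : ℝ) * Complex.I) := by
    intro i; norm_num; ring_nf
  simp_rw [he] at h
  calc ∑ i : Fin m, Real.cos (2 * Real.pi * t * i / m)
      = ∑ i : Fin m, (Complex.exp ((2 * Real.pi * t * i / m : ℝ) * Complex.I)).re := by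
        exact Finset.sum_congr rfl fun i _ => (Complex.exp_ofReal_mul_I_re _).symm
    _ = (∑ i : Fin m, Complex.exp ((2 * Real.pi * t * i / m : ℝ) * Complex.I)).re :=
        (Complex.re_sum _ _).symm
    _ = 0 := by rw [h]; rfl

lemma sum_sin_zero (m : ℕ) (hm : 0 < m) (t : ℤ) :
    ∑ i : Fin m, Real.sin (2 * Real.pi * t * i / m) = 0 := by
  by_cases ht : (m:ℤ) ∣ t
  · obtain ⟨q, rfl⟩ := ht
    apply Finset.sum_eq_zero
    intro i _
    have : 2 * Real.pi * ((m:ℤ)*q : ℤ) * i / m = ((2 * q * i : ℤ) : ℝ) * Real.pi := by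
      have hm' : (m : ℝ) ≠ 0 := Nat.cast_ne_zero.mpr hm.ne'
      push_cast
      field_simp
    rw [this, Real.sin_int_mul_pi]
  · have h := sum_exp_zero m hm t ht
    have he : ∀ i : Fin m, Complex.exp (2 * Real.pi * Complex.I * t * i / m)
        = Complex.exp ((2 * Real.pi * t * i / m : ℝ) * Complex.I) := by
      intro i; norm_num; ring_nf
    simp_rw [he] at h
    calc ∑ i : Fin m, Real.sin (2 * Real.pi * t * i / m)
        = ∑ i : Fin m, (Complex.exp ((2 * Real.pi * t * i / m : ℝ) * Complex.I)).im := by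
          exact Finset.sum_congr rfl fun i _ => (Complex.exp_ofReal_mul_I_im _).symm
      _ = (∑ i : Fin m, Complex.exp ((2 * Real.pi * t * i / m : ℝ) * Complex.I)).im :=
          (Complex.im_sum _ _).symm
      _ = 0 := by rw [h]; rfl

lemma notdvd (m k l : ℕ) (hkl' : k ≠ l) (h2 : k + l < m) : ¬ ((m:ℤ) ∣ (k - l : ℤ)) := by
  intro h
  have h0 : (k:ℤ) - l ≠ 0 := by omega
  have habs : |(k:ℤ) - l| < m := by rw [abs_lt]; omega
  exact h0 (Int.eq_zero_of_abs_lt_dvd h habs)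

lemma notdvd_add (m k l : ℕ) (hkl : 0 < k + l) (h2 : k + l < m) : ¬ ((m:ℤ) ∣ (k + l : ℤ)) := by
  intro h
  have := Int.le_of_dvd (by exact_mod_cast hkl) h
  omega

lemma key_cc (m k l : ℕ) (hm : 0 < m) (hkl : 0 < k + l) (h2 : k + l < m) :
    ∑ i : Fin m, Real.cos (2 * Real.pi * k * i / m) * Real.cos (2 * Real.pi * l * i / m)
      = if k = l then (m:ℝ) / 2 else 0 := by
  have hpt : ∀ i : Fin m, Real.cos (2 * Real.pi * k * i / m) * Real.cos (2 * Real.pi * l * i / m)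
      = (Real.cos (2 * Real.pi * ((k - l : ℤ) : ℝ) * i / m) + Real.cos (2 * Real.pi * ((k + l : ℤ) : ℝ) * i / m)) / 2 := by
    intro i
    have hA : 2 * Real.pi * (k - l : ℤ) * i / m
        = 2 * Real.pi * k * i / m - 2 * Real.pi * l * i / m := by push_cast; ring
    have hB : 2 * Real.pi * (k + l : ℤ) * i / m
        = 2 * Real.pi * k * i / m + 2 * Real.pi * l * i / m := by push_cast; ring
    rw [hA, hB, Real.cos_sub, Real.cos_add]; ring
  simp_rw [hpt]
  rw [← Finset.sum_div, Finset.sum_add_distrib]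
  have hsum : ∑ i : Fin m, Real.cos (2 * Real.pi * ((k + l : ℤ) : ℝ) * i / m) = 0 :=
    sum_cos_zero m hm _ (notdvd_add m k l hkl h2)
  by_cases hkl' : k = l
  · subst hkl'
    simp only [sub_self, if_pos rfl]
    have h1 : ∀ i : Fin m, Real.cos (2 * Real.pi * ((0:ℤ):ℝ) * i / m) = 1 := by
      intro i; norm_num
    rw [Finset.sum_congr rfl (fun i _ => h1 i), hsum]
    simp [Finset.card_univ]
  · rw [if_neg hkl', sum_cos_zero m hm _ (notdvd m k l hkl' h2), hsum]
    norm_num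

lemma key_ss (m k l : ℕ) (hm : 0 < m) (hkl : 0 < k + l) (h2 : k + l < m) :
    ∑ i : Fin m, Real.sin (2 * Real.pi * k * i / m) * Real.sin (2 * Real.pi * l * i / m)
      = if k = l then (m:ℝ) / 2 else 0 := by
  have hpt : ∀ i : Fin m, Real.sin (2 * Real.pi * k * i / m) * Real.sin (2 * Real.pi * l * i / m)
      = (Real.cos (2 * Real.pi * ((k - l : ℤ) : ℝ) * i / m) - Real.cos (2 * Real.pi * ((k + l : ℤ) : ℝ) * i / m)) / 2 := by
    intro i
    have hA : 2 * Real.pi * (k - l : ℤ) * i / m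
        = 2 * Real.pi * k * i / m - 2 * Real.pi * l * i / m := by push_cast; ring
    have hB : 2 * Real.pi * (k + l : ℤ) * i / m
        = 2 * Real.pi * k * i / m + 2 * Real.pi * l * i / m := by push_cast; ring
    rw [hA, hB, Real.cos_sub, Real.cos_add]; ring
  simp_rw [hpt]
  rw [← Finset.sum_div, Finset.sum_sub_distrib]
  have hsum : ∑ i : Fin m, Real.cos (2 * Real.pi * ((k + l : ℤ) : ℝ) * i / m) = 0 :=
    sum_cos_zero m hm _ (notdvd_add m k l hkl h2)
  by_cases hkl' : k = l
  · subst hkl'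
    simp only [sub_self, if_pos rfl]
    have h1 : ∀ i : Fin m, Real.cos (2 * Real.pi * ((0:ℤ):ℝ) * i / m) = 1 := by
      intro i; norm_num
    rw [Finset.sum_congr rfl (fun i _ => h1 i), hsum]
    simp [Finset.card_univ]
  · rw [if_neg hkl', sum_cos_zero m hm _ (notdvd m k l hkl' h2), hsum]
    norm_num

lemma key_cs (m k l : ℕ) (hm : 0 < m) :
    ∑ i : Fin m, Real.cos (2 * Real.pi * k * i / m) * Real.sin (2 * Real.pi * l * i / m) = 0 := by
  have hpt : ∀ i : Fin m, Real.cos (2 * Real.pi * k * i / m) * Real.sin (2 * Real.pi * l * i / m)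
      = (Real.sin (2 * Real.pi * ((k + l : ℤ) : ℝ) * i / m) - Real.sin (2 * Real.pi * ((k - l : ℤ) : ℝ) * i / m)) / 2 := by
    intro i
    have hA : 2 * Real.pi * (k - l : ℤ) * i / m
        = 2 * Real.pi * k * i / m - 2 * Real.pi * l * i / m := by push_cast; ring
    have hB : 2 * Real.pi * (k + l : ℤ) * i / m
        = 2 * Real.pi * k * i / m + 2 * Real.pi * l * i / m := by push_cast; ring
    rw [hA, hB, Real.sin_sub, Real.sin_add]; ring
  simp_rw [hpt]
  rw [← Finset.sum_div, Finset.sum_sub_distrib]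
  rw [sum_sin_zero m hm, sum_sin_zero m hm]
  norm_num

lemma sum_cos_zero' (m : ℕ) (hm : 0 < m) (k : ℕ) (h0 : 0 < k) (h1 : k < m) :
    ∑ i : Fin m, Real.cos (2 * Real.pi * k * i / m) = 0 := by
  have h := sum_cos_zero m hm k (by
    intro h
    have := Int.le_of_dvd (by exact_mod_cast h0) h
    omega)
  calc ∑ i : Fin m, Real.cos (2 * Real.pi * k * i / m)
      = ∑ i : Fin m, Real.cos (2 * Real.pi * ((k:ℤ)) * i / m) := by push_cast; rfl
    _ = 0 := h

lemma sum_sin_zero' (m : ℕ) (hm : 0 < m) (k : ℕ) :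
    ∑ i : Fin m, Real.sin (2 * Real.pi * k * i / m) = 0 := by
  calc ∑ i : Fin m, Real.sin (2 * Real.pi * k * i / m)
      = ∑ i : Fin m, Real.sin (2 * Real.pi * ((k:ℤ)) * i / m) := by push_cast; rfl
    _ = 0 := sum_sin_zero m hm k

noncomputable def vv (m t : ℕ) (i : Fin m) : ℝ :=
  if t = 0 then (Real.sqrt m)⁻¹
  else if t % 2 = 1 then Real.sqrt (2 / m) * Real.cos (2 * Real.pi * ((t + 1) / 2 : ℕ) * i / m)
  else Real.sqrt (2 / m) * Real.sin (2 * Real.pi * ((t + 1) / 2 : ℕ) * i / m)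

lemma vv_zero (m : ℕ) (i : Fin m) : vv m 0 i = (Real.sqrt m)⁻¹ := by simp [vv]

lemma vv_odd (m t : ℕ) (h : t % 2 = 1) (i : Fin m) :
    vv m t i = Real.sqrt (2 / m) * Real.cos (2 * Real.pi * ((t + 1) / 2 : ℕ) * i / m) := by
  have h0 : t ≠ 0 := by omega
  simp [vv, h0, h]

lemma vv_even (m t : ℕ) (h0 : t ≠ 0) (h : t % 2 = 0) (i : Fin m) :
    vv m t i = Real.sqrt (2 / m) * Real.sin (2 * Real.pi * ((t + 1) / 2 : ℕ) * i / m) := by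
  simp [vv, h0, h]

lemma sq_sqrt_two_div (m : ℕ) (hm : 0 < m) :
    Real.sqrt (2 / m) * Real.sqrt (2 / m) = 2 / m :=
  Real.mul_self_sqrt (by positivity)

lemma vv_orth_zero (m t : ℕ) (hm : 0 < m) (ht0 : t ≠ 0)
    (hb1 : 0 < (t+1)/2) (hb2 : (t+1)/2 < m) :
    ∑ i : Fin m, vv m 0 i * vv m t i = 0 := by
  rcases Nat.even_or_odd t with he | ho
  · have h2 : t % 2 = 0 := Nat.even_iff.mp he
    simp_rw [vv_zero, vv_even m t ht0 h2, ← mul_assoc, ← Finset.mul_sum]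
    rw [sum_sin_zero' m hm, mul_zero]
  · have h2 : t % 2 = 1 := Nat.odd_iff.mp ho
    simp_rw [vv_zero, vv_odd m t h2, ← mul_assoc, ← Finset.mul_sum]
    rw [sum_cos_zero' m hm _ hb1 hb2, mul_zero]

lemma vv_orth (m s t : ℕ) (hm : 0 < m) (hst : (s+1)/2 + (t+1)/2 < m) :
    ∑ i : Fin m, vv m s i * vv m t i = if s = t then 1 else 0 := by
  have hm' : (m:ℝ) ≠ 0 := Nat.cast_ne_zero.mpr hm.ne'
  by_cases hs0 : s = 0
  · subst hs0
    by_cases ht0 : t = 0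
    · subst ht0
      simp only [vv_zero, if_pos rfl]
      have hc : ((Real.sqrt m)⁻¹ * (Real.sqrt m)⁻¹ : ℝ) = (m:ℝ)⁻¹ := by
        rw [← mul_inv, Real.mul_self_sqrt (Nat.cast_nonneg m)]
      simp [hc, Finset.card_univ]
      field_simp
    · rw [if_neg (Ne.symm ht0)]
      exact vv_orth_zero m t hm ht0 (by omega) (by omega)
  · by_cases ht0 : t = 0
    · subst ht0
      rw [if_neg hs0]
      rw [Finset.sum_congr rfl (fun i (_ : i ∈ Finset.univ) => mul_comm (vv m s i) (vv m 0 i))]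
      exact vv_orth_zero m s hm hs0 (by omega) (by omega)
    · set a := (s+1)/2 with ha_def
      set b := (t+1)/2 with hb_def
      have ha : 0 < a := by omega
      have hb : 0 < b := by omega
      have hab : 0 < a + b := by omega
      have habm : a + b < m := hst
      have hfac : ∀ x y : ℝ, (Real.sqrt (2/m) * x) * (Real.sqrt (2/m) * y)
          = (2/m) * (x * y) := by
        intro x y
        calc (Real.sqrt (2/m) * x) * (Real.sqrt (2/m) * y)
            = (Real.sqrt (2/m) * Real.sqrt (2/m)) * (x * y) := by ring
          _ = (2/m) * (x * y) := by rw [sq_sqrt_two_div m hm]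
      rcases Nat.even_or_odd s with hse | hso <;> rcases Nat.even_or_odd t with hte | hto
      · -- even, even : sin sin
        have h2s : s % 2 = 0 := Nat.even_iff.mp hse
        have h2t : t % 2 = 0 := Nat.even_iff.mp hte
        simp_rw [vv_even m s hs0 h2s, vv_even m t ht0 h2t, hfac, ← Finset.mul_sum]
        rw [key_ss m a b hm hab habm]
        have hiff : s = t ↔ a = b := by omega
        by_cases hab' : a = b
        · rw [if_pos hab', if_pos (hiff.mpr hab')]; field_simp
        · rw [if_neg hab', if_neg (fun h => hab' (hiff.mp h)), mul_zero]
      · -- even s, odd t : sin cos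
        have h2s : s % 2 = 0 := Nat.even_iff.mp hse
        have h2t : t % 2 = 1 := Nat.odd_iff.mp hto
        have hne : s ≠ t := by omega
        rw [if_neg hne]
        simp_rw [vv_even m s hs0 h2s, vv_odd m t h2t, hfac,
          mul_comm (Real.sin _) (Real.cos _), ← Finset.mul_sum]
        rw [key_cs m b a hm, mul_zero]
      · -- odd s, even t : cos sin
        have h2s : s % 2 = 1 := Nat.odd_iff.mp hso
        have h2t : t % 2 = 0 := Nat.even_iff.mp hte
        have hne : s ≠ t := by omega
        rw [if_neg hne]
        simp_rw [vv_odd m s h2s, vv_even m t ht0 h2t, hfac, ← Finset.mul_sum]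
        rw [key_cs m a b hm, mul_zero]
      · -- odd odd : cos cos
        have h2s : s % 2 = 1 := Nat.odd_iff.mp hso
        have h2t : t % 2 = 1 := Nat.odd_iff.mp hto
        simp_rw [vv_odd m s h2s, vv_odd m t h2t, hfac, ← Finset.mul_sum]
        rw [key_cc m a b hm hab habm]
        have hiff : s = t ↔ a = b := by omega
        by_cases hab' : a = b
        · rw [if_pos hab', if_pos (hiff.mpr hab')]; field_simp
        · rw [if_neg hab', if_neg (fun h => hab' (hiff.mp h)), mul_zero]

lemma vv_sq_pair (m k : ℕ) (hm : 0 < m) (hk : 0 < k) (i : Fin m) :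
    vv m (2*k-1) i ^ 2 + vv m (2*k) i ^ 2 = 2 / m := by
  have h1 : (2*k-1) % 2 = 1 := by omega
  have h10 : (2*k-1) ≠ 0 := by omega
  have h2 : (2*k) % 2 = 0 := by omega
  have h20 : 2*k ≠ 0 := by omega
  have hf1 : (2*k-1+1)/2 = k := by omega
  have hf2 : (2*k+1)/2 = k := by omega
  simp only [vv, if_neg h10, if_neg h20, h1, h2, hf1, hf2, if_true, zero_ne_one, if_false, reduceIte]
  rw [mul_pow, mul_pow, ← mul_add, Real.cos_sq_add_sin_sq, mul_one,
    Real.sq_sqrt (by positivity : (0:ℝ) ≤ 2 / m)]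

lemma diag_Ico (m K : ℕ) (hm : 0 < m) (i : Fin m) :
    ∑ t ∈ Finset.Ico 1 (2*K+1), vv m t i ^ 2 = 2*K/m := by
  induction K with
  | zero => simp
  | succ K ih =>
    have h1 : 2*(K+1)+1 = (2*K+1) + 1 + 1 := by ring
    rw [h1, Finset.sum_Ico_succ_top (by omega), Finset.sum_Ico_succ_top (by omega), ih]
    have hp := vv_sq_pair m (K+1) hm (by omega) i
    have e1 : 2*(K+1)-1 = 2*K+1 := by omega
    have e2 : 2*(K+1) = 2*K+1+1 := by omega
    rw [e1, e2] at hp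
    have hm' : (m:ℝ) ≠ 0 := Nat.cast_ne_zero.mpr hm.ne'
    rw [add_assoc, hp]
    push_cast
    field_simp

lemma diag_total (m n : ℕ) (hm : 0 < m) (i : Fin m) :
    ∑ j : Fin n, vv m (j + (n+1) % 2) i ^ 2 = n / m := by
  have hm' : (m:ℝ) ≠ 0 := Nat.cast_ne_zero.mpr hm.ne'
  rw [Fin.sum_univ_eq_sum_range (fun j => vv m (j + (n+1) % 2) i ^ 2) n]
  rcases Nat.even_or_odd n with he | ho
  · have h2 : (n+1) % 2 = 1 := by have := Nat.even_iff.mp he; omega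
    simp_rw [h2]
    have : ∑ j ∈ Finset.range n, vv m (j + 1) i ^ 2
        = ∑ t ∈ Finset.Ico 1 (n+1), vv m t i ^ 2 := by
      rw [Finset.sum_Ico_eq_sum_range]
      simp_rw [add_comm 1]
      simp
    rw [this]
    obtain ⟨K, hK⟩ := he
    have hn : n + 1 = 2*K + 1 := by omega
    rw [hn, diag_Ico m K hm i, hK]
    push_cast; ring
  · have h2 : (n+1) % 2 = 0 := by have := Nat.odd_iff.mp ho; omega
    simp_rw [h2]
    obtain ⟨K, hK⟩ := ho
    have h0n : 0 < n := by omega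
    rw [Finset.range_eq_Ico, Finset.sum_eq_sum_Ico_succ_bot h0n]
    simp only [add_zero, zero_add]
    have hn : n = 2*K + 1 := by omega
    rw [hn, diag_Ico m K hm i]
    simp only [vv, if_true, reduceIte]
    have : ((Real.sqrt m)⁻¹)^2 = (m:ℝ)⁻¹ := by
      rw [← Real.sqrt_inv, Real.sq_sqrt (by positivity)]
    rw [this]
    push_cast
    field_simp
    ring


lemma double_sum {n m : ℕ} (w : Fin n → Fin m → ℝ)
    (horth : ∀ j j', ∑ i, w j i * w j' i = if j = j' then 1 else 0)
    (c : Fin n → ℝ) :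
    ∑ i, (∑ j, c j * w j i) ^ 2 = ∑ j, c j ^ 2 := by
  calc ∑ i, (∑ j, c j * w j i) ^ 2
      = ∑ i, ∑ j, ∑ j', (c j * w j i) * (c j' * w j' i) := by
        refine Finset.sum_congr rfl fun i _ => ?_
        rw [sq, Finset.sum_mul_sum]
    _ = ∑ j, ∑ j', (c j * c j') * ∑ i, w j i * w j' i := by
        rw [Finset.sum_comm]
        refine Finset.sum_congr rfl fun j _ => ?_
        rw [Finset.sum_comm]
        refine Finset.sum_congr rfl fun j' _ => ?_
        rw [Finset.mul_sum]
        exact Finset.sum_congr rfl fun i _ => by ring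
    _ = ∑ j, c j ^ 2 := by
        refine Finset.sum_congr rfl fun j _ => ?_
        rw [Finset.sum_eq_single j]
        · rw [horth j j, if_pos rfl, mul_one, sq]
        · intro j' _ hne
          rw [horth j j', if_neg (fun h => hne h.symm), mul_zero]
        · intro h; exact absurd (Finset.mem_univ j) h

lemma coord_bound {n m : ℕ} (hm : 0 < m) (hnm : n < m) (u : Fin n → Fin m → ℝ)
    (horth : ∀ j j', ∑ i, u j i * u j' i = if j = j' then 1 else 0)
    (hdiag : ∀ i, ∑ j, (u j i) ^ 2 = (n : ℝ) / m)
    (x : Fin m → ℝ) (hx : ∑ i, x i ^ 2 ≤ 1)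
    (hker : ∀ j, ∑ i, u j i * x i = 0) (i₀ : Fin m) :
    |x i₀| ≤ Real.sqrt (1 - (n : ℝ) / m) := by
  set g : Fin m → ℝ := fun i => (if i = i₀ then 1 else 0) - ∑ j, u j i₀ * u j i with hg
  have h1 : ∑ i, g i * x i = x i₀ := by
    simp only [hg, sub_mul, Finset.sum_sub_distrib, ite_mul, one_mul, zero_mul]
    rw [Finset.sum_ite_eq' Finset.univ i₀ x]
    simp only [Finset.mem_univ, if_pos]
    have h2 : ∑ i, (∑ j, u j i₀ * u j i) * x i
        = ∑ j, u j i₀ * ∑ i, u j i * x i := by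
      calc ∑ i, (∑ j, u j i₀ * u j i) * x i
          = ∑ i, ∑ j, u j i₀ * (u j i * x i) := by
            refine Finset.sum_congr rfl fun i _ => ?_
            rw [Finset.sum_mul]
            exact Finset.sum_congr rfl fun j _ => by ring
        _ = ∑ j, ∑ i, u j i₀ * (u j i * x i) := Finset.sum_comm
        _ = ∑ j, u j i₀ * ∑ i, u j i * x i :=
            Finset.sum_congr rfl fun j _ => (Finset.mul_sum _ _ _).symm
    rw [h2]
    simp only [hker, mul_zero, Finset.sum_const_zero, sub_zero]
  have h2 : ∑ i, g i ^ 2 = 1 - (n : ℝ) / m := by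
    have expand : ∀ i, g i ^ 2 = (if i = i₀ then (1:ℝ) else 0) ^ 2
        - 2 * ((if i = i₀ then (1:ℝ) else 0) * ∑ j, u j i₀ * u j i)
        + (∑ j, u j i₀ * u j i) ^ 2 := by
      intro i; simp only [hg]; ring
    simp_rw [expand]
    rw [Finset.sum_add_distrib, Finset.sum_sub_distrib]
    have e1 : ∑ i, (if i = i₀ then (1:ℝ) else 0) ^ 2 = 1 := by
      simp [Finset.sum_ite_eq']
    have e2 : ∑ i, ((if i = i₀ then (1:ℝ) else 0) * ∑ j, u j i₀ * u j i)
        = (n : ℝ) / m := by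
      simp_rw [ite_mul, one_mul, zero_mul]
      rw [Finset.sum_ite_eq' Finset.univ i₀]
      simp only [Finset.mem_univ, if_pos]
      calc ∑ j, u j i₀ * u j i₀ = ∑ j, u j i₀ ^ 2 := by
            exact Finset.sum_congr rfl fun j _ => (sq (u j i₀)).symm
        _ = (n : ℝ) / m := hdiag i₀
    have e3 : ∑ i, (∑ j, u j i₀ * u j i) ^ 2 = (n : ℝ) / m := by
      rw [double_sum u horth (fun j => u j i₀)]
      exact hdiag i₀
    rw [e1, ← Finset.mul_sum, e2, e3]
    ring
  have hcs := Finset.sum_mul_sq_le_sq_mul_sq Finset.univ g x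
  rw [h1, h2] at hcs
  have hx2 : (x i₀) ^ 2 ≤ 1 - (n : ℝ) / m := by
    have h0 : (0:ℝ) ≤ 1 - (n : ℝ) / m := by
      have : (n : ℝ) / m ≤ 1 := by
        rw [div_le_one (by positivity)]
        exact_mod_cast hnm.le
      linarith
    nlinarith [hcs, hx, h0]
  calc |x i₀| = Real.sqrt ((x i₀) ^ 2) := (Real.sqrt_sq_eq_abs _).symm
    _ ≤ Real.sqrt (1 - (n : ℝ) / m) := Real.sqrt_le_sqrt hx2


lemma lower_exists (m n : ℕ) (hm : 0 < m) (hnm : n < m)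
    (Z : Submodule ℝ (PiLp ⊤ (fun _ : Fin m => ℝ)))
    (hZ : Module.finrank ℝ ((PiLp ⊤ (fun _ : Fin m => ℝ)) ⧸ Z) ≤ n) :
    ∃ x : PiLp ⊤ (fun _ : Fin m => ℝ), x ∈ Z ∧ Real.sqrt (∑ i, x i ^ 2) ≤ 1 ∧
      Real.sqrt (1 - (n:ℝ)/m) ≤ ‖x‖ := by
  classical
  have hY : Module.finrank ℝ (PiLp ⊤ (fun _ : Fin m => ℝ)) = m := by
    rw [(WithLp.linearEquiv ⊤ ℝ (Fin m → ℝ)).finrank_eq]; simp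
  have hq := Submodule.finrank_quotient_add_finrank Z
  set E := EuclideanSpace ℝ (Fin m)
  let e : (PiLp ⊤ (fun _ : Fin m => ℝ)) ≃ₗ[ℝ] E :=
    (WithLp.linearEquiv ⊤ ℝ (∀ _ : Fin m, ℝ)).trans
      (WithLp.linearEquiv 2 ℝ (∀ _ : Fin m, ℝ)).symm
  let Z' : Submodule ℝ E := Z.map (e : (PiLp ⊤ (fun _ : Fin m => ℝ)) →ₗ[ℝ] E)
  have hZ'rank : Module.finrank ℝ Z' = Module.finrank ℝ Z :=
    LinearEquiv.finrank_map_eq e Z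
  set d := Module.finrank ℝ Z' with hd_def
  have hd : m ≤ n + d := by omega
  let b := stdOrthonormalBasis ℝ Z'
  let w : Fin d → E := fun j => (b j : E)
  have hw : ∀ j j', ∑ i, w j i * w j' i = if j = j' then 1 else 0 := by
    intro j j'
    have h := orthonormal_iff_ite.mp b.orthonormal j j'
    rw [Submodule.coe_inner] at h
    simp [E, PiLp.inner_apply, RCLike.inner_apply, conj_trivial] at h
    rw [← h]; exact Finset.sum_congr rfl fun i _ => mul_comm _ _
  have hwZ : ∀ j, w j ∈ Z' := fun j => (b j).2
  have hsum : ∑ i, ∑ j, (w j i)^2 = (d : ℝ) := by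
    rw [Finset.sum_comm]
    have h1 : ∀ j : Fin d, ∑ i, (w j i)^2 = 1 := by
      intro j
      have := hw j j
      rw [if_pos rfl] at this
      calc ∑ i, (w j i)^2 = ∑ i, w j i * w j i :=
            Finset.sum_congr rfl fun i _ => sq (w j i)
        _ = 1 := this
    rw [Finset.sum_congr rfl fun j _ => h1 j]
    simp [Finset.card_univ]
  have hmR : (m:ℝ) ≠ 0 := Nat.cast_ne_zero.mpr hm.ne'
  have hex : ∃ i₀, 1 - (n:ℝ)/m ≤ ∑ j, (w j i₀)^2 := by
    by_contra hcon
    push_neg at hcon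
    have : Nonempty (Fin m) := ⟨⟨0, hm⟩⟩
    have hne : (Finset.univ : Finset (Fin m)).Nonempty := Finset.univ_nonempty
    have hlt : ∑ i, ∑ j, (w j i)^2 < ∑ _i : Fin m, (1 - (n:ℝ)/m) :=
      Finset.sum_lt_sum_of_nonempty hne (fun i _ => hcon i)
    rw [hsum, Finset.sum_const, Finset.card_univ, Fintype.card_fin, nsmul_eq_mul] at hlt
    have hmn : (m:ℝ) * (1 - (n:ℝ)/m) = m - n := by field_simp
    rw [hmn] at hlt
    have hcast : (m:ℝ) ≤ (n:ℝ) + d := by exact_mod_cast hd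
    linarith
  obtain ⟨i₀, hi₀⟩ := hex
  set c : Fin d → ℝ := fun j => w j i₀ with hc
  set S := ∑ j, c j ^ 2 with hS_def
  have hS : 1 - (n:ℝ)/m ≤ S := hi₀
  have hpos : 0 < 1 - (n:ℝ)/m := by
    have : (n:ℝ)/m < 1 := by
      rw [div_lt_one (by positivity)]
      exact_mod_cast hnm
    linarith
  have hSpos : 0 < S := lt_of_lt_of_le hpos hS
  let y : E := ∑ j, c j • w j
  have hyZ' : y ∈ Z' := Submodule.sum_mem _ (fun j _ => Z'.smul_mem _ (hwZ j))
  have hyi : ∀ i, y i = ∑ j, c j * w j i := by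
    intro i
    have h1 : y i = ∑ j, (c j • w j) i :=
      by simp only [y, E, WithLp.ofLp_sum, Finset.sum_apply]
    rw [h1]
    exact Finset.sum_congr rfl fun j _ => by rw [PiLp.smul_apply, smul_eq_mul]
  have hy2 : ∑ i, (y i)^2 = S := by
    simp_rw [hyi]
    exact double_sum (fun j i => w j i) hw c
  have hyi₀ : y i₀ = S := by
    rw [hyi]
    exact Finset.sum_congr rfl fun j _ => (sq (c j)).symm
  let r := (Real.sqrt S)⁻¹
  let x' := r • y
  have hx'Z' : x' ∈ Z' := Z'.smul_mem _ hyZ'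
  obtain ⟨z, hz, hez⟩ := Submodule.mem_map.mp hx'Z'
  have hzi : ∀ i, z i = x' i := by
    intro i
    rw [← hez]
    rfl
  have hr2 : r * r = S⁻¹ := by
    rw [← mul_inv, Real.mul_self_sqrt hSpos.le]
  refine ⟨z, hz, ?_, ?_⟩
  · have h2 : ∑ i, z i ^ 2 = 1 := by
      have : ∀ i, z i ^ 2 = (r * r) * (y i)^2 := by
        intro i
        rw [hzi i]
        show (r • y) i ^ 2 = _
        rw [PiLp.smul_apply, smul_eq_mul]
        ring
      simp_rw [this]
      rw [← Finset.mul_sum, hy2, hr2, inv_mul_cancel₀ hSpos.ne']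
    rw [h2, Real.sqrt_one]
  · have hzi₀ : z i₀ = Real.sqrt S := by
      rw [hzi i₀]
      show (r • y) i₀ = _
      rw [PiLp.smul_apply, smul_eq_mul, hyi₀]
      show (Real.sqrt S)⁻¹ * S = _
      rw [mul_comm, ← div_eq_mul_inv, Real.div_sqrt]
    have hnorm : ‖z i₀‖ ≤ ‖z‖ := by
      rw [PiLp.norm_eq_ciSup]
      exact le_ciSup (f := fun i => ‖z i‖) (Set.Finite.bddAbove (Set.finite_range _)) i₀
    have : Real.sqrt (1 - (n:ℝ)/m) ≤ ‖z i₀‖ := by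
      rw [hzi₀, Real.norm_eq_abs, abs_of_nonneg (Real.sqrt_nonneg S)]
      exact Real.sqrt_le_sqrt hS
    linarith


/-- For `n ≤ m`, the Gelfand n-width of the unit ball of `ℓ_2^m` as a subset of
`ℓ_∞^m` equals `√(1 - n/m)`. -/
theorem gelWidth_l2Ball_in_linfty (m n : ℕ) (hm : 0 < m) (hnm : n ≤ m) :
    gelWidth n {x : PiLp ⊤ (fun _ : Fin m => ℝ) | Real.sqrt (∑ i, (x i) ^ 2) ≤ 1} =
      ENNReal.ofReal (Real.sqrt (1 - (n : ℝ) / m)) := by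
  classical
  have hY : Module.finrank ℝ (PiLp ⊤ (fun _ : Fin m => ℝ)) = m := by
    rw [(WithLp.linearEquiv ⊤ ℝ (Fin m → ℝ)).finrank_eq]; simp
  have hNE : Nonempty (Fin m) := ⟨⟨0, hm⟩⟩
  apply le_antisymm
  · -- upper bound
    rcases eq_or_lt_of_le hnm with heq | hlt
    · -- n = m : take Z = ⊥
      refine iInf_le_of_le ⊥ (iInf_le_of_le ⟨inferInstance, ?_⟩ ?_)
      · rw [(Submodule.quotEquivOfEqBot ⊥ rfl).finrank_eq, hY, ← heq]
      · apply iSup₂_le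
        intro x hx
        have hx0 : x = 0 := by simpa using hx.2
        simp [hx0]
    · -- n < m : Fourier construction
      set ε := (n+1) % 2 with hε
      set u : Fin n → Fin m → ℝ := fun j i => vv m (j.val + ε) i with hu
      have horth : ∀ j j', ∑ i, u j i * u j' i = if j = j' then 1 else 0 := by
        intro j j'
        have hj := j.isLt
        have hj' := j'.isLt
        have h := vv_orth m (j.val + ε) (j'.val + ε) hm (by omega)
        rw [hu]
        simp only []
        rw [h]
        rcases eq_or_ne j j' with rfl | hne
        · rw [if_pos rfl, if_pos rfl]
        · rw [if_neg (fun hc => hne (Fin.ext (by omega))), if_neg hne]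
      have hdiag : ∀ i, ∑ j, (u j i)^2 = (n:ℝ)/m := fun i => diag_total m n hm i
      let A : (PiLp ⊤ (fun _ : Fin m => ℝ)) →ₗ[ℝ] (Fin n → ℝ) :=
        { toFun := fun x => fun j => ∑ i, u j i * x i
          map_add' := by
            intro x y
            funext j
            simp only [PiLp.add_apply, mul_add, Finset.sum_add_distrib]
            rfl
          map_smul' := by
            intro cc x
            funext j
            simp only [PiLp.smul_apply, smul_eq_mul, RingHom.id_apply, Pi.smul_apply]
            rw [Finset.mul_sum]
            exact Finset.sum_congr rfl fun i _ => by ring }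
      refine iInf_le_of_le (LinearMap.ker A) (iInf_le_of_le ⟨inferInstance, ?_⟩ ?_)
      · rw [A.quotKerEquivRange.finrank_eq]
        calc Module.finrank ℝ (LinearMap.range A) ≤ Module.finrank ℝ (Fin n → ℝ) :=
              Submodule.finrank_le _
          _ = n := Module.finrank_fin_fun ℝ
      · apply iSup₂_le
        intro x hx
        obtain ⟨hxH, hxZ⟩ := hx
        rw [← enorm_eq_nnnorm, ← ofReal_norm]
        apply ENNReal.ofReal_le_ofReal
        have hsum0 : (0:ℝ) ≤ ∑ i, x i ^ 2 := by positivity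
        have hxsum : ∑ i, x i ^ 2 ≤ 1 := by
          have h1 : Real.sqrt (∑ i, (x i)^2) ≤ 1 := hxH
          nlinarith [Real.sq_sqrt hsum0, Real.sqrt_nonneg (∑ i, (x i)^2)]
        have hker : ∀ j, ∑ i, u j i * x i = 0 := by
          intro j
          have := LinearMap.mem_ker.mp hxZ
          exact congrFun this j
        rw [PiLp.norm_eq_ciSup]
        apply ciSup_le
        intro i
        rw [Real.norm_eq_abs]
        exact coord_bound hm hlt u horth hdiag x hxsum hker i
  · -- lower bound
    by_cases hcase : n = m
    · subst hcase
      have h0 : (1:ℝ) - (n:ℝ)/n = 0 := by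
        field_simp
        ring
      rw [h0, Real.sqrt_zero, ENNReal.ofReal_zero]
      exact zero_le
    · have hlt : n < m := lt_of_le_of_ne hnm hcase
      refine le_iInf fun Z => le_iInf fun hZ => ?_
      obtain ⟨x, hxZ, hxH, hxn⟩ := lower_exists m n hm hlt Z hZ.2
      calc ENNReal.ofReal (Real.sqrt (1 - (n:ℝ)/m))
          ≤ ENNReal.ofReal ‖x‖ := ENNReal.ofReal_le_ofReal hxn
        _ = (‖x‖₊ : ℝ≥0∞) := ofReal_norm x
        _ ≤ _ := le_iSup₂_of_le x ⟨hxH, hxZ⟩ le_rfl
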